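/- arXiv:1503.00572 — 2 statements merged into one kernel-verified Lean document; each statement's English description precedes it below -/
import Mathlib

section
/- Let C ⊆ V be independent in G and N = |V|. Then the (N-1)-dimensional volume of M(G,C) equals (|Σ(G,C)| / N!) times the volume of the probability simplex Δ(V), where Σ(G,C) is the set of bijections σ : {1,…,N} → V with σ⁻¹(x) < σ⁻¹(y) whenever y ∈ C and x ∼ y. -/
open MeasureTheory
open scoped ENNReal NNReal
open Set

/-- The probability simplex, as a subset of Euclidean space. -/
def probSimplex (V : Type*) [Fintype V] : Set (EuclideanSpace ℝ V) :=
  {p | (∀ v, 0 ≤ p v) ∧ ∑ v, p v = 1}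

/-- The polytope of `C`-modes of a graph `G`, inside the probability simplex. -/
def modePolytope {V : Type*} [Fintype V] (G : SimpleGraph V) (C : Set V) :
    Set (EuclideanSpace ℝ V) :=
  {p | p ∈ probSimplex V ∧ ∀ x ∈ C, ∀ y, G.Adj x y → p y ≤ p x}


section AuxVolumeModePolytope

variable {V : Type*} [Fintype V]

/-- order simplex -/
def ordSimplex (σ : Fin (Fintype.card V) ≃ V) : Set (EuclideanSpace ℝ V) :=
  {p | (∀ v, 0 ≤ p v) ∧ (∑ v, p v = 1) ∧ Monotone (fun i => p (σ i))}

lemma contEval (v : V) : Continuous (fun p : EuclideanSpace ℝ V => p v) :=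
  (EuclideanSpace.proj v : EuclideanSpace ℝ V →L[ℝ] ℝ).continuous

lemma measOrd (σ : Fin (Fintype.card V) ≃ V) : MeasurableSet (ordSimplex σ) := by
  have : ordSimplex σ = (⋂ v, {p : EuclideanSpace ℝ V | 0 ≤ p v}) ∩
      ({p : EuclideanSpace ℝ V | ∑ v, p v = 1} ∩
        ⋂ i, ⋂ j, {p : EuclideanSpace ℝ V | i ≤ j → p (σ i) ≤ p (σ j)}) := by
    ext p
    simp only [ordSimplex, mem_setOf_eq, mem_inter_iff, mem_iInter, Monotone]

  rw [this]
  apply MeasurableSet.inter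
  · exact MeasurableSet.iInter fun v =>
      (isClosed_le continuous_const (contEval v)).measurableSet
  apply MeasurableSet.inter
  · exact (isClosed_eq (continuous_finset_sum _ fun v _ => contEval v)
      continuous_const).measurableSet
  · refine MeasurableSet.iInter fun i => MeasurableSet.iInter fun j => ?_
    by_cases h : i ≤ j
    · simp only [h, forall_true_left]
      exact (isClosed_le (contEval _) (contEval _)).measurableSet
    · simp [h]

lemma measOrdEq (d : ℝ) (σ τ : Fin (Fintype.card V) ≃ V) :
    μH[d] (ordSimplex σ) = μH[d] (ordSimplex τ) := by
  set e : V ≃ V := σ.symm.trans τ with he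
  set T := LinearIsometryEquiv.piLpCongrLeft 2 ℝ ℝ e with hT
  have hTapp : ∀ (p : EuclideanSpace ℝ V) (v : V), T p v = p (e.symm v) := fun p v => rfl
  have hs : ∀ i, e.symm (τ i) = σ i := fun i => by simp [he]
  have hpre : ordSimplex σ = (⇑T) ⁻¹' (ordSimplex τ) := by
    ext p
    simp only [ordSimplex, mem_setOf_eq, mem_preimage, hTapp]
    constructor
    · rintro ⟨h1, h2, h3⟩
      refine ⟨fun v => h1 _, ?_, ?_⟩
      · rw [Equiv.sum_comp e.symm p]; exact h2
      · have hfe : (fun i => p (e.symm (τ i))) = fun i => p (σ i) :=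
          funext fun i => congrArg p (hs i)
        exact hfe ▸ h3
    · rintro ⟨h1, h2, h3⟩
      refine ⟨fun v => ?_, ?_, ?_⟩
      · have := h1 (e v); rwa [Equiv.symm_apply_apply] at this
      · rwa [Equiv.sum_comp e.symm p] at h2
      · have hfe : (fun i => p (e.symm (τ i))) = fun i => p (σ i) :=
          funext fun i => congrArg p (hs i)
        exact hfe ▸ h3
  rw [hpre]
  rw [T.isometry.hausdorffMeasure_preimage (Or.inr T.surjective)]
  simp [T.surjective.range_eq]

set_option maxHeartbeats 2000000 in
lemma nullPair (a b : V) :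
    μH[((Fintype.card V - 1 : ℕ) : ℝ)]
      {p : EuclideanSpace ℝ V | a ≠ b ∧ (∑ v, p v = 1) ∧ p a = p b} = 0 := by
  classical
  rcases eq_or_ne a b with hab | hab
  · simp [hab]
  have hN : 1 < Fintype.card V := Fintype.one_lt_card_iff.2 ⟨a, b, hab⟩
  set Z : Set (EuclideanSpace ℝ V) :=
    {p : EuclideanSpace ℝ V | a ≠ b ∧ (∑ v, p v = 1) ∧ p a = p b} with hZ
  rcases Z.eq_empty_or_nonempty with h | ⟨p₀, hp₀⟩
  · simp [h]
  -- the linear map whose kernel contains `Z - p₀`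
  set Lsum : EuclideanSpace ℝ V →ₗ[ℝ] ℝ :=
    { toFun := fun p => ∑ v, p v,
      map_add' := fun p q => by simp [PiLp.add_apply, Finset.sum_add_distrib],
      map_smul' := fun c p => by simp [PiLp.smul_apply, Finset.mul_sum] } with hLsum
  set Ldiff : EuclideanSpace ℝ V →ₗ[ℝ] ℝ :=
    (EuclideanSpace.proj a).toLinearMap - (EuclideanSpace.proj b).toLinearMap with hLdiff
  set L := Lsum.prod Ldiff with hL
  set K := LinearMap.ker L with hK
  have hLsurj : Function.Surjective L := by
    intro st
    refine ⟨((st.1 + st.2)/2) • EuclideanSpace.single a 1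
      + ((st.1 - st.2)/2) • EuclideanSpace.single b 1, ?_⟩
    have hsum : ∀ (c : V) (x : ℝ), ∑ v, EuclideanSpace.single c x v = x := by
      intro c x
      simp [EuclideanSpace.single_apply]
    ext
    · simp [hL, hLsum, PiLp.add_apply, PiLp.smul_apply, Finset.sum_add_distrib,
        ← Finset.mul_sum, hsum]
      ring
    · simp [hL, hLdiff, hLsum, PiLp.add_apply, PiLp.smul_apply,
        EuclideanSpace.single_apply, hab, Ne.symm hab]
      ring
  have hrank : Module.finrank ℝ K = Fintype.card V - 2 := by
    have h1 := LinearMap.finrank_range_add_finrank_ker L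
    rw [LinearMap.range_eq_top.2 hLsurj] at h1
    rw [finrank_top, Module.finrank_prod, Module.finrank_self] at h1
    rw [finrank_euclideanSpace] at h1
    rw [← hK] at h1
    omega
  -- Z is contained in a translate of K
  have hsub : Z ⊆ (fun q => p₀ + q) '' (K : Set (EuclideanSpace ℝ V)) := by
    intro p hp
    refine ⟨p - p₀, ?_, by show p₀ + (p - p₀) = p; abel⟩
    have hps := hp.2.1
    have hpab := hp.2.2
    have hp₀s := hp₀.2.1
    have hp₀ab := hp₀.2.2
    show p - p₀ ∈ K
    simp only [hK, LinearMap.mem_ker, hL, LinearMap.prod_apply, Function.prod, Prod.mk_eq_zero]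
    constructor
    · simp only [hLsum, LinearMap.coe_mk, AddHom.coe_mk, PiLp.sub_apply]
      rw [Finset.sum_sub_distrib, hps, hp₀s, sub_self]
    · show (EuclideanSpace.proj a) (p - p₀) - (EuclideanSpace.proj b) (p - p₀) = 0
      show (p - p₀) a - (p - p₀) b = 0
      simp only [PiLp.sub_apply]
      rw [hpab, hp₀ab]
      ring
  -- dimension count
  have hdim : dimH Z ≤ ((Fintype.card V - 2 : ℕ) : ℝ≥0∞) := by
    have htrans : Isometry (fun q : EuclideanSpace ℝ V => p₀ + q) :=
      Isometry.of_dist_eq fun x y => by simp [dist_add_left]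
    have hKiso : Isometry ((↑) : K → EuclideanSpace ℝ V) :=
      Isometry.of_dist_eq fun x y => by
        rw [dist_eq_norm, dist_eq_norm, ← Submodule.coe_sub, Submodule.coe_norm]
    calc dimH Z ≤ dimH ((fun q => p₀ + q) '' (K : Set (EuclideanSpace ℝ V))) := dimH_mono hsub
    _ ≤ dimH (K : Set (EuclideanSpace ℝ V)) := htrans.lipschitz.dimH_image_le _
    _ ≤ dimH (Set.univ : Set K) := by
        have := hKiso.lipschitz.dimH_image_le Set.univ
        simpa [Set.image_univ, Subtype.range_coe] using this
    _ = (Module.finrank ℝ ↥K : ℝ≥0∞) := Real.dimH_univ_eq_finrank ↥K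
    _ = ((Fintype.card V - 2 : ℕ) : ℝ≥0∞) := by rw [hrank]
  have hlt : dimH Z < (((Fintype.card V - 1 : ℕ) : ℝ≥0) : ℝ≥0∞) := by
    refine hdim.trans_lt ?_
    rw [ENNReal.coe_natCast]
    exact_mod_cast Nat.sub_lt_sub_left hN (by norm_num)
  have h0 := hausdorffMeasure_of_dimH_lt hlt
  simpa only [NNReal.coe_natCast] using h0

lemma exists_ordSimplex {G : SimpleGraph V} {C : Set V}
    (hInd : ∀ x ∈ C, ∀ y ∈ C, ¬ G.Adj x y) {p : EuclideanSpace ℝ V}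
    (h1 : ∀ v, 0 ≤ p v) (h2 : ∑ v, p v = 1)
    (h3 : ∀ x ∈ C, ∀ y, G.Adj x y → p y ≤ p x) :
    ∃ σ : Fin (Fintype.card V) ≃ V,
      (∀ x y, y ∈ C → G.Adj x y → σ.symm x < σ.symm y) ∧ p ∈ ordSimplex σ := by
  classical
  set key : V → ℝ ×ₗ ℕ := fun v => toLex (p v, if v ∈ C then 1 else 0) with hkey
  set e : Fin (Fintype.card V) ≃ V := (Fintype.equivFin V).symm with he
  set s := Tuple.sort (key ∘ e) with hs
  set σ : Fin (Fintype.card V) ≃ V := s.trans e with hσ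
  have hmono : Monotone (fun i => key (σ i)) := by
    have h := Tuple.monotone_sort (key ∘ e)
    rw [← hs] at h
    exact h
  have hfst : ∀ {i j}, i ≤ j → p (σ i) ≤ p (σ j) := by
    intro i j hij
    have := hmono hij
    rcases Prod.Lex.le_iff.1 this with h | h
    · exact le_of_lt h
    · exact le_of_eq h.1
  refine ⟨σ, ?_, h1, h2, fun i j hij => hfst hij⟩
  intro x y hyC hadj
  have hxC : x ∉ C := fun hxC => hInd y hyC x hxC hadj.symm
  have hpxy : p x ≤ p y := h3 y hyC x hadj.symm
  have hklt : key x < key y := by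
    rcases lt_or_eq_of_le hpxy with h | h
    · exact Prod.Lex.lt_iff.2 (Or.inl h)
    · refine Prod.Lex.lt_iff.2 (Or.inr ⟨h, ?_⟩)
      simp [hkey, hxC, hyC]
  by_contra hcon
  push_neg at hcon
  have := hmono hcon
  simp only [Equiv.apply_symm_apply] at this
  exact absurd this (not_le.2 hklt)

lemma ordSimplex_pair {σ τ : Fin (Fintype.card V) ≃ V} (hστ : σ ≠ τ)
    {p : EuclideanSpace ℝ V} (hp : p ∈ ordSimplex σ ∩ ordSimplex τ) :
    ∃ a b, a ≠ b ∧ (∑ v, p v = 1) ∧ p a = p b := by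
  obtain ⟨i, hi⟩ : ∃ i, σ i ≠ τ i := by
    by_contra h; push_neg at h; exact hστ (Equiv.ext h)
  set π : Equiv.Perm (Fin (Fintype.card V)) := τ.trans σ.symm with hπ
  have hcomp : ((fun k => p (σ k)) ∘ ⇑π) = fun k => p (τ k) := by
    funext k
    show p (σ (π k)) = p (τ k)
    rw [hπ]
    exact congrArg p (σ.apply_symm_apply (τ k))
  have h1 : Monotone ((fun k => p (σ k)) ∘ ⇑π) := by rw [hcomp]; exact hp.2.2.2
  have h2 : Monotone ((fun k => p (σ k)) ∘ ⇑(Equiv.refl (Fin (Fintype.card V)))) :=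
    hp.1.2.2
  have huniq := Tuple.unique_monotone h1 h2
  rw [hcomp] at huniq
  have := congrFun huniq i
  exact ⟨σ i, τ i, hi, hp.1.2.1, this.symm⟩

lemma ordSimplex_inter_null {σ τ : Fin (Fintype.card V) ≃ V} (hστ : σ ≠ τ) :
    μH[((Fintype.card V - 1 : ℕ) : ℝ)] (ordSimplex σ ∩ ordSimplex τ) = 0 := by
  have hsub : ordSimplex σ ∩ ordSimplex τ ⊆
      ⋃ a, ⋃ b, {p : EuclideanSpace ℝ V | a ≠ b ∧ (∑ v, p v = 1) ∧ p a = p b} := by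
    intro p hp
    obtain ⟨a, b, h⟩ := ordSimplex_pair hστ hp
    exact mem_iUnion.2 ⟨a, mem_iUnion.2 ⟨b, h⟩⟩
  exact measure_mono_null hsub
    (measure_iUnion_null fun a => measure_iUnion_null fun b => nullPair a b)

lemma measure_biUnion_ordSimplex (A : Finset (Fin (Fintype.card V) ≃ V))
    (σ₀ : Fin (Fintype.card V) ≃ V) :
    μH[((Fintype.card V - 1 : ℕ) : ℝ)] (⋃ σ ∈ A, ordSimplex σ)
      = A.card * μH[((Fintype.card V - 1 : ℕ) : ℝ)] (ordSimplex σ₀) := by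
  rw [measure_biUnion_finset₀
    (fun σ _ τ _ hστ => ordSimplex_inter_null hστ)
    (fun σ _ => (measOrd σ).nullMeasurableSet)]
  rw [Finset.sum_congr rfl fun σ _ => measOrdEq _ σ σ₀, Finset.sum_const, nsmul_eq_mul]


end AuxVolumeModePolytope

/-- For an independent `C`, the `(|V|-1)`-dimensional volume of the mode polytope is
`|Σ(G,C)| / |V|!` times the volume of the probability simplex, where `Σ(G,C)` is the
set of orderings `σ` of `V` with `σ⁻¹ x < σ⁻¹ y` whenever `y ∈ C` and `x ∼ y`. -/
theorem volume_modePolytope {V : Type*} [Fintype V]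
    (G : SimpleGraph V) (C : Set V)
    (hInd : ∀ x ∈ C, ∀ y ∈ C, ¬ G.Adj x y) :
    μH[((Fintype.card V - 1 : ℕ) : ℝ)] (modePolytope G C) =
      ((Nat.card {σ : Fin (Fintype.card V) ≃ V //
          ∀ x y, y ∈ C → G.Adj x y → σ.symm x < σ.symm y} : ℝ≥0∞) /
        (Nat.factorial (Fintype.card V) : ℝ≥0∞)) *
      μH[((Fintype.card V - 1 : ℕ) : ℝ)] (probSimplex V) := by
  classical
  set P : (Fin (Fintype.card V) ≃ V) → Prop :=
    fun σ => ∀ x y, y ∈ C → G.Adj x y → σ.symm x < σ.symm y with hP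
  set A : Finset (Fin (Fintype.card V) ≃ V) := Finset.univ.filter P with hA
  set σ₀ : Fin (Fintype.card V) ≃ V := (Fintype.equivFin V).symm with hσ₀
  have hMeq : modePolytope G C = ⋃ σ ∈ A, ordSimplex σ := by
    ext p
    constructor
    · intro hp
      obtain ⟨σ, hs1, hs2⟩ := exists_ordSimplex hInd hp.1.1 hp.1.2 hp.2
      exact mem_iUnion₂.2 ⟨σ, Finset.mem_filter.2 ⟨Finset.mem_univ _, hs1⟩, hs2⟩
    · intro hp
      obtain ⟨σ, hσA, hσp⟩ := mem_iUnion₂.1 hp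
      have hPσ : P σ := (Finset.mem_filter.1 hσA).2
      refine ⟨⟨hσp.1, hσp.2.1⟩, ?_⟩
      intro x hx y hadj
      have hlt := hPσ y x hx hadj.symm
      have h1 : p (σ (σ.symm y)) ≤ p (σ (σ.symm x)) := hσp.2.2 hlt.le
      rwa [σ.apply_symm_apply, σ.apply_symm_apply] at h1
  have hDeq : probSimplex V
      = ⋃ σ ∈ (Finset.univ : Finset (Fin (Fintype.card V) ≃ V)), ordSimplex σ := by
    ext p
    constructor
    · intro hp
      obtain ⟨σ, _, hs2⟩ := exists_ordSimplex (G := G) (C := (∅ : Set V))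
        (by simp) hp.1 hp.2 (by simp)
      exact mem_iUnion₂.2 ⟨σ, Finset.mem_univ _, hs2⟩
    · intro hp
      obtain ⟨σ, _, hσp⟩ := mem_iUnion₂.1 hp
      exact ⟨hσp.1, hσp.2.1⟩
  rw [hMeq, hDeq, measure_biUnion_ordSimplex A σ₀,
    measure_biUnion_ordSimplex Finset.univ σ₀]
  have hcardA : Nat.card {σ : Fin (Fintype.card V) ≃ V //
      ∀ x y, y ∈ C → G.Adj x y → σ.symm x < σ.symm y} = A.card := by
    rw [Nat.card_eq_fintype_card, hA]
    convert Fintype.card_subtype P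
  have hcardU : (Finset.univ : Finset (Fin (Fintype.card V) ≃ V)).card
      = Nat.factorial (Fintype.card V) := by
    rw [Finset.card_univ, Fintype.card_equiv (Fintype.equivFin V).symm, Fintype.card_fin]
  rw [hcardA, hcardU, ← mul_assoc,
    ENNReal.div_mul_cancel (Nat.cast_ne_zero.2 (Nat.factorial_ne_zero _))
      (ENNReal.natCast_ne_top _)]
end

section
/- Let C ⊆ V be independent in G. Then vol(S(G,C)) = (∏_{x ∈ V} 1/(|N_C(x)| + 1)) · vol(Δ(V)), where N_C(x) = {y ∈ C : y ∼ x} and the volume is the (|V|-1)-dimensional volume in the affine hull of the probability simplex. -/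
open MeasureTheory
open scoped ENNReal

open Finset

set_option linter.unusedSectionVars false

/-- The polytope of strong `C`-modes of a graph `G`, inside the probability
simplex. -/
def strongModePolytope {V : Type*} [Fintype V] (G : SimpleGraph V)
    [DecidableRel G.Adj] (C : Set V) : Set (EuclideanSpace ℝ V) :=
  {p | p ∈ probSimplex V ∧ ∀ x ∈ C, ∑ y ∈ G.neighborFinset x, p y ≤ p x}

namespace SMPAux

variable {V : Type*} [Fintype V] [DecidableEq V]
    (G : SimpleGraph V) [DecidableRel G.Adj] (C : Finset V)

/-- real degree into `C`. -/
noncomputable def dR (x : V) : ℝ := ((C.filter fun y => G.Adj y x).card : ℝ)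

lemma dR_nonneg (x : V) : 0 ≤ dR G C x := Nat.cast_nonneg _

lemma dR_add_one_pos (x : V) : 0 < dR G C x + 1 := by
  have := dR_nonneg G C x; linarith

/-- the matrix of the linear change of variables. -/
noncomputable def modMat : Matrix V V ℝ := fun x y =>
  if x ∈ C then (if x = y then 1 else 0) + (if G.Adj x y then (dR G C y + 1)⁻¹ else 0)
  else if x = y then (dR G C y + 1)⁻¹ else 0

variable (hInd : ∀ x ∈ C, ∀ y ∈ C, ¬ G.Adj x y)

include hInd in
lemma dR_eq_zero_of_mem {x : V} (hx : x ∈ C) : dR G C x = 0 := by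
  unfold dR
  norm_cast
  simp only [Finset.card_eq_zero, Finset.filter_eq_empty_iff]
  exact fun y hy => hInd y hy x hx

include hInd in
lemma modMat_colsum (z : V) : ∑ x, modMat G C x z = 1 := by
  classical
  unfold modMat
  rw [← Finset.sum_filter_add_sum_filter_not Finset.univ (· ∈ C)]
  simp only [Finset.filter_mem_eq_inter, Finset.univ_inter]
  rw [Finset.sum_congr rfl (fun x hx => if_pos hx),
    Finset.sum_congr rfl (fun x (hx : x ∈ Finset.univ.filter (· ∉ C)) =>
      if_neg (Finset.mem_filter.mp hx).2)]
  rw [Finset.sum_add_distrib]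
  have h1 : ∑ x ∈ C, (if x = z then (1:ℝ) else 0) = if z ∈ C then 1 else 0 := by
    simp [Finset.sum_ite_eq']
  have h2 : ∑ x ∈ C, (if G.Adj x z then (dR G C z + 1)⁻¹ else (0:ℝ))
      = dR G C z * (dR G C z + 1)⁻¹ := by
    rw [Finset.sum_ite, Finset.sum_const, Finset.sum_const_zero, add_zero, nsmul_eq_mul]
    rfl
  have h3 : ∑ x ∈ Finset.univ.filter (· ∉ C), (if x = z then (dR G C z + 1)⁻¹ else (0:ℝ))
      = if z ∉ C then (dR G C z + 1)⁻¹ else 0 := by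
    simp [Finset.sum_ite_eq']
  rw [h1, h2, h3]
  have hpos := dR_add_one_pos G C z
  by_cases hz : z ∈ C
  · rw [dR_eq_zero_of_mem G C hInd hz]
    simp [hz]
  · simp only [hz, if_neg, if_false, if_true, zero_add, hz, not_false_iff, if_pos]
    field_simp


/-- the linear change of variables, as a map on Euclidean space. -/
noncomputable def modLin : EuclideanSpace ℝ V →ₗ[ℝ] EuclideanSpace ℝ V where
  toFun p := WithLp.toLp 2 (fun x => ∑ y, modMat G C x y * p y)
  map_add' p q := by
    ext x
    simp only [PiLp.add_apply, PiLp.toLp_apply]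
    rw [← Finset.sum_add_distrib]
    exact Finset.sum_congr rfl fun y _ => by ring
  map_smul' c p := by
    ext x
    simp only [PiLp.smul_apply, PiLp.toLp_apply, RingHom.id_apply, smul_eq_mul, Finset.mul_sum]
    exact Finset.sum_congr rfl fun y _ => by ring

lemma modLin_apply (p : EuclideanSpace ℝ V) (x : V) :
    modLin G C p x = if x ∈ C then
      p x + ∑ y ∈ G.neighborFinset x, (dR G C y + 1)⁻¹ * p y
    else (dR G C x + 1)⁻¹ * p x := by
  show ∑ y, modMat G C x y * p y = _
  unfold modMat
  by_cases hx : x ∈ C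
  · simp only [hx, if_true, add_mul]
    rw [Finset.sum_add_distrib]
    congr 1
    · simp [Finset.sum_ite_eq, ite_mul]
    · simp only [ite_mul, zero_mul]
      rw [← Finset.sum_filter]
      apply Finset.sum_congr _ (fun y _ => rfl)
      ext y
      simp [SimpleGraph.mem_neighborFinset]
  · simp only [hx, if_false]
    simp [Finset.sum_ite_eq, ite_mul]


lemma swap_sum (h : V → ℝ) :
    ∑ x ∈ C, ∑ y ∈ G.neighborFinset x, h y = ∑ y, dR G C y * h y := by
  classical
  have : ∀ x ∈ C, ∑ y ∈ G.neighborFinset x, h y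
      = ∑ y, (if G.Adj x y then h y else 0) := by
    intro x _
    rw [← Finset.sum_filter]
    apply Finset.sum_congr _ (fun y _ => rfl)
    ext y
    simp [SimpleGraph.mem_neighborFinset]
  rw [Finset.sum_congr rfl this, Finset.sum_comm]
  apply Finset.sum_congr rfl
  intro y _
  have : ∀ x ∈ C, (if G.Adj x y then h y else 0) = (if G.Adj x y then 1 else 0) * h y := by
    intro x _; by_cases hxy : G.Adj x y <;> simp [hxy]
  rw [Finset.sum_congr rfl this, ← Finset.sum_mul]
  congr 1
  rw [Finset.sum_ite, Finset.sum_const, Finset.sum_const_zero, add_zero, nsmul_eq_mul, mul_one]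
  rfl

include hInd in
lemma sum_modLin (p : EuclideanSpace ℝ V) : ∑ x, modLin G C p x = ∑ x, p x := by
  have : ∀ x : V, modLin G C p x = ∑ y, modMat G C x y * p y := fun _ => rfl
  rw [Finset.sum_congr rfl fun x _ => this x, Finset.sum_comm]
  apply Finset.sum_congr rfl
  intro y _
  rw [← Finset.sum_mul, modMat_colsum G C hInd, one_mul]

/-- inverse of the change of variables (as a plain map). -/
noncomputable def invMod (q : EuclideanSpace ℝ V) : EuclideanSpace ℝ V := WithLp.toLp 2 (fun x =>
  if x ∈ C then q x - ∑ y ∈ G.neighborFinset x, q y else (dR G C x + 1) * q x)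

lemma invMod_apply (q : EuclideanSpace ℝ V) (x : V) : invMod G C q x =
    if x ∈ C then q x - ∑ y ∈ G.neighborFinset x, q y else (dR G C x + 1) * q x := rfl

include hInd in
lemma not_mem_of_adj {x y : V} (hx : x ∈ C) (hxy : G.Adj x y) : y ∉ C :=
  fun hy => hInd x hx y hy hxy

include hInd in
lemma modLin_invMod (q : EuclideanSpace ℝ V) : modLin G C (invMod G C q) = q := by
  ext x
  rw [modLin_apply]
  by_cases hx : x ∈ C
  · simp only [hx, if_true]
    have h1 : ∀ y ∈ G.neighborFinset x, (dR G C y + 1)⁻¹ * invMod G C q y = q y := by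
      intro y hy
      have hyC : y ∉ C := not_mem_of_adj G C hInd hx ((SimpleGraph.mem_neighborFinset _ _ _).mp hy)
      unfold invMod
      simp only [PiLp.toLp_apply, hyC, if_false]
      rw [← mul_assoc, inv_mul_cancel₀ (dR_add_one_pos G C y).ne', one_mul]
    rw [Finset.sum_congr rfl h1, invMod_apply]
    simp only [hx, if_true]
    ring
  · simp only [hx, if_false]
    rw [invMod_apply]
    simp only [hx, if_false]
    rw [← mul_assoc, inv_mul_cancel₀ (dR_add_one_pos G C x).ne', one_mul]

include hInd in
lemma invMod_modLin (p : EuclideanSpace ℝ V) : invMod G C (modLin G C p) = p := by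
  ext x
  unfold invMod
  by_cases hx : x ∈ C
  · simp only [PiLp.toLp_apply, hx, if_true]
    have h1 : ∀ y ∈ G.neighborFinset x, modLin G C p y = (dR G C y + 1)⁻¹ * p y := by
      intro y hy
      have hyC : y ∉ C := not_mem_of_adj G C hInd hx ((SimpleGraph.mem_neighborFinset _ _ _).mp hy)
      rw [modLin_apply]
      simp [hyC]
    rw [Finset.sum_congr rfl h1, modLin_apply]
    simp only [hx, if_true]
    ring
  · simp only [PiLp.toLp_apply, hx, if_false]
    rw [modLin_apply]
    simp only [hx, if_false]
    rw [← mul_assoc, mul_inv_cancel₀ (dR_add_one_pos G C x).ne', one_mul]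

include hInd in
lemma image_modLin :
    modLin G C '' probSimplex V = strongModePolytope G ↑C := by
  apply Set.Subset.antisymm
  · rintro _ ⟨p, ⟨hp0, hp1⟩, rfl⟩
    have hnn : ∀ x, 0 ≤ modLin G C p x := by
      intro x
      rw [modLin_apply]
      by_cases hx : x ∈ C
      · simp only [hx, if_true]
        have : 0 ≤ ∑ y ∈ G.neighborFinset x, (dR G C y + 1)⁻¹ * p y :=
          Finset.sum_nonneg fun y _ =>
            mul_nonneg (inv_nonneg.mpr (dR_add_one_pos G C y).le) (hp0 y)
        have := hp0 x; linarith
      · simp only [hx, if_false]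
        exact mul_nonneg (inv_nonneg.mpr (dR_add_one_pos G C x).le) (hp0 x)
    refine ⟨⟨hnn, ?_⟩, ?_⟩
    · rw [sum_modLin G C hInd]; exact hp1
    · intro x hx
      have hx' : x ∈ C := hx
      have h1 : ∀ y ∈ G.neighborFinset x, modLin G C p y = (dR G C y + 1)⁻¹ * p y := by
        intro y hy
        have hyC : y ∉ C := not_mem_of_adj G C hInd hx' ((SimpleGraph.mem_neighborFinset _ _ _).mp hy)
        rw [modLin_apply]; simp [hyC]
      rw [Finset.sum_congr rfl h1, modLin_apply]
      simp only [hx', if_true]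
      have := hp0 x; linarith
  · rintro q ⟨⟨hq0, hq1⟩, hqC⟩
    refine ⟨invMod G C q, ⟨?_, ?_⟩, modLin_invMod G C hInd q⟩
    · intro x
      unfold invMod
      by_cases hx : x ∈ C
      · simp only [PiLp.toLp_apply, hx, if_true]
        have := hqC x hx
        linarith
      · simp only [PiLp.toLp_apply, hx, if_false]
        exact mul_nonneg (dR_add_one_pos G C x).le (hq0 x)
    · have h := sum_modLin G C hInd (invMod G C q)
      rw [modLin_invMod G C hInd q] at h
      exact h.symm.trans hq1


include hInd in
lemma det_modMat : (modMat G C).det = ∏ x, (dR G C x + 1)⁻¹ := by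
  classical
  rw [Matrix.twoBlockTriangular_det (modMat G C) (· ∈ C) ?_]
  · have hb1 : (Matrix.toSquareBlockProp (modMat G C) (· ∈ C)) = 1 := by
      ext i j
      rcases i with ⟨i, hi⟩; rcases j with ⟨j, hj⟩
      rw [Matrix.toSquareBlockProp_def]
      show modMat G C i j = _
      unfold modMat
      simp only [hi, if_true]
      have : ¬ G.Adj i j := hInd i hi j hj
      by_cases hij : i = j
      · subst hij; simp [this, Matrix.one_apply]
      · have : ¬ (⟨i, hi⟩ : {a // a ∈ C}) = ⟨j, hj⟩ := by simpa using hij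
        simp [hij, ‹¬ G.Adj i j›, Matrix.one_apply, this]
    have hb2 : (Matrix.toSquareBlockProp (modMat G C) (fun i => ¬ i ∈ C))
        = Matrix.diagonal (fun i : {a // ¬ a ∈ C} => (dR G C (i : V) + 1)⁻¹) := by
      ext i j
      rcases i with ⟨i, hi⟩; rcases j with ⟨j, hj⟩
      rw [Matrix.toSquareBlockProp_def]
      show modMat G C i j = _
      unfold modMat
      simp only [hi, if_false]
      by_cases hij : i = j
      · subst hij; simp [Matrix.diagonal]
      · have : ¬ (⟨i, hi⟩ : {a // ¬ a ∈ C}) = ⟨j, hj⟩ := by simpa using hij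
        simp [hij, Matrix.diagonal_apply_ne _ this]
    rw [hb1, hb2]
    simp only [Matrix.det_one, one_mul, Matrix.det_diagonal]
    have h1 : ∀ x ∈ C, (dR G C x + 1)⁻¹ = 1 := by
      intro x hx
      rw [dR_eq_zero_of_mem G C hInd hx]
      norm_num
    calc ∏ i : {a // ¬ a ∈ C}, (dR G C (i : V) + 1)⁻¹
        = ∏ x ∈ Finset.univ.filter (fun a => ¬ a ∈ C), (dR G C x + 1)⁻¹ := by
          exact (Finset.prod_subtype (Finset.univ.filter (fun a => ¬ a ∈ C))
            (fun x => by simp) (fun x => (dR G C x + 1)⁻¹)).symm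
      _ = ∏ x, (dR G C x + 1)⁻¹ := by
          rw [← Finset.prod_filter_mul_prod_filter_not Finset.univ (· ∈ C)
            (fun x => (dR G C x + 1)⁻¹)]
          rw [Finset.prod_congr rfl (fun x hx => h1 x (Finset.mem_filter.mp hx).2), 
            Finset.prod_const_one, one_mul]
  · intro i hi j hj
    unfold modMat
    have : ¬ i = j := fun h => hi (h ▸ hj)
    simp [hi, this]

include hInd in
lemma det_modLin : LinearMap.det (modLin G C) = ∏ x, (dR G C x + 1)⁻¹ := by
  classical
  rw [← LinearMap.det_toMatrix (PiLp.basisFun 2 ℝ V) (modLin G C)]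
  have : LinearMap.toMatrix (PiLp.basisFun 2 ℝ V) (PiLp.basisFun 2 ℝ V) (modLin G C)
      = modMat G C := by
    ext x y
    rw [LinearMap.toMatrix_apply]
    simp only [PiLp.basisFun_repr]
    show ∑ z, modMat G C x z * (PiLp.basisFun 2 ℝ V y) z = _
    have hy : ∀ z, (PiLp.basisFun 2 ℝ V y) z = if z = y then 1 else 0 := by
      intro z
      rw [PiLp.basisFun_apply]
      show (Pi.single y 1 : V → ℝ) z = _
      by_cases hzy : z = y
      · subst hzy; simp
      · simp [hzy, Pi.single_eq_of_ne hzy]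
    rw [Finset.sum_congr rfl fun z _ => by rw [hy z]]
    simp [Finset.sum_ite_eq, mul_ite]
  rw [this, det_modMat G C hInd]


variable (v0 : V)

/-- auxiliary nilpotent matrix. -/
def Rmat (v0 : V) : Matrix V V ℝ := fun x y => if x = v0 ∧ ¬ y = v0 then 1 else 0

/-- the conjugated matrix, block triangular at `v0`. -/
noncomputable def Nmat (v0 : V) : Matrix V V ℝ := fun y z =>
  if y = v0 then (if z = v0 then 1 else 0)
  else modMat G C y z - (if z = v0 then 0 else modMat G C y v0)

lemma mul_Rmat (B : Matrix V V ℝ) (y z : V) :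
    (B * Rmat v0) y z = if z = v0 then 0 else B y v0 := by
  rw [Matrix.mul_apply]
  unfold Rmat
  by_cases hz : z = v0
  · simp [hz]
  · simp only [hz, not_false_iff, and_true, if_false]
    rw [Finset.sum_congr rfl (fun k _ => by rw [mul_ite, mul_one, mul_zero])]
    simp [Finset.sum_ite_eq]

lemma Rmat_mul (B : Matrix V V ℝ) (y z : V) :
    (Rmat v0 * B) y z = if y = v0 then (∑ k, B k z) - B v0 z else 0 := by
  rw [Matrix.mul_apply]
  unfold Rmat
  by_cases hy : y = v0
  · simp only [hy, true_and, if_true]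
    have : ∀ k, (if ¬ k = v0 then (1:ℝ) else 0) * B k z
        = B k z - (if k = v0 then B k z else 0) := by
      intro k; by_cases hk : k = v0 <;> simp [hk]
    rw [Finset.sum_congr rfl (fun k _ => this k), Finset.sum_sub_distrib]
    simp [Finset.sum_ite_eq]
  · simp [hy]

lemma onePR_mul_oneMR : (1 + Rmat v0) * (1 - Rmat (V := V) v0) = 1 := by
  have hR2 : Rmat (V := V) v0 * Rmat v0 = 0 := by
    ext y z
    rw [mul_Rmat]
    unfold Rmat
    by_cases hz : z = v0 <;> simp [hz]
  rw [Matrix.mul_sub, Matrix.add_mul, Matrix.add_mul, hR2]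
  simp

include hInd in
lemma Nmat_mul_key : Nmat G C v0 * (1 + Rmat v0) = (1 + Rmat v0) * modMat G C := by
  ext y z
  rw [Matrix.mul_add, Matrix.add_mul, Matrix.mul_one, Matrix.one_mul]
  show Nmat G C v0 y z + (Nmat G C v0 * Rmat v0) y z
      = modMat G C y z + (Rmat v0 * modMat G C) y z
  rw [mul_Rmat, Rmat_mul]
  rw [modMat_colsum G C hInd z]
  unfold Nmat
  by_cases hy : y = v0
  · by_cases hz : z = v0 <;> simp [hy, hz]
  · by_cases hz : z = v0 <;> simp [hy, hz]

include hInd in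
lemma det_Nmat : (Nmat G C v0).det = (modMat G C).det := by
  have h1 : (1 + Rmat (V := V) v0).det * (1 - Rmat (V := V) v0).det = 1 := by
    rw [← Matrix.det_mul, onePR_mul_oneMR, Matrix.det_one]
  have h2 : (1 + Rmat (V := V) v0).det ≠ 0 := left_ne_zero_of_mul_eq_one h1
  have h3 := congrArg Matrix.det (Nmat_mul_key G C hInd v0)
  rw [Matrix.det_mul, Matrix.det_mul] at h3
  have := mul_right_cancel₀ h2 (h3.trans (mul_comm _ _))
  exact this


/-- the sum-of-coordinates functional. -/
noncomputable def sigmaLin (V : Type*) [Fintype V] : EuclideanSpace ℝ V →ₗ[ℝ] ℝ where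
  toFun p := ∑ x, p x
  map_add' p q := by simp [Finset.sum_add_distrib]
  map_smul' c p := by simp [Finset.mul_sum]

lemma sigmaLin_apply (p : EuclideanSpace ℝ V) : sigmaLin V p = ∑ x, p x := rfl

/-- difference-of-basis vectors, spanning the kernel of `sigmaLin`. -/
noncomputable def wvec (y : V) : EuclideanSpace ℝ V :=
  EuclideanSpace.single y 1 - EuclideanSpace.single v0 1

lemma wvec_apply (y z : V) :
    wvec v0 y z = (if z = y then 1 else 0) - (if z = v0 then 1 else 0) := by
  unfold wvec
  simp [EuclideanSpace.single_apply]

lemma wvec_mem (y : V) : wvec v0 y ∈ LinearMap.ker (sigmaLin V) := by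
  rw [LinearMap.mem_ker, sigmaLin_apply]
  rw [Finset.sum_congr rfl (fun z _ => wvec_apply v0 y z), Finset.sum_sub_distrib]
  simp [Finset.sum_ite_eq]

include hInd in
lemma modLin_mem_ker (p : EuclideanSpace ℝ V) (hp : p ∈ LinearMap.ker (sigmaLin V)) :
    modLin G C p ∈ LinearMap.ker (sigmaLin V) := by
  rw [LinearMap.mem_ker, sigmaLin_apply] at hp ⊢
  rw [sum_modLin G C hInd]
  exact hp

lemma repr_w (w : EuclideanSpace ℝ V) (hw : w ∈ LinearMap.ker (sigmaLin V)) :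
    w = ∑ y : {a : V // ¬ a = v0}, w (y : V) • wvec v0 (y : V) := by
  classical
  ext z
  rw [WithLp.ofLp_sum, Finset.sum_apply]
  simp only [PiLp.smul_apply, smul_eq_mul, wvec_apply]
  rw [← Finset.sum_subtype (Finset.univ.erase v0)
    (fun a => by simp [Finset.mem_erase]) (fun a => w a * ((if z = a then (1:ℝ) else 0)
      - (if z = v0 then 1 else 0)))]
  by_cases hz : z = v0
  · have h1 : ∀ a ∈ Finset.univ.erase v0, w a * ((if z = a then (1:ℝ) else 0)
        - (if z = v0 then 1 else 0)) = - w a := by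
      intro a ha
      have hna : ¬ v0 = a := fun h => (Finset.mem_erase.mp ha).1 h.symm
      have hna' : ¬ z = a := hz ▸ hna
      simp [hna, hna', hz]
    rw [Finset.sum_congr rfl h1, Finset.sum_neg_distrib]
    have hsum : ∑ x, w x = 0 := hw
    have h2 := Finset.add_sum_erase Finset.univ w (Finset.mem_univ v0)
    rw [hsum] at h2
    rw [hz]
    linarith [h2]
  · have h1 : ∀ a ∈ Finset.univ.erase v0, w a * ((if z = a then (1:ℝ) else 0)
        - (if z = v0 then 1 else 0)) = if z = a then w a else 0 := by
      intro a ha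
      have hav : ¬ a = v0 := (Finset.mem_erase.mp ha).1
      by_cases hza : z = a <;> simp [hza, hz, hav]
    rw [Finset.sum_congr rfl h1]
    have hzmem : z ∈ Finset.univ.erase v0 := Finset.mem_erase.mpr ⟨hz, Finset.mem_univ z⟩
    rw [Finset.sum_ite_eq]
    simp [hzmem]

lemma wvec_li : LinearIndependent ℝ (fun y : {a : V // ¬ a = v0} =>
    (⟨wvec v0 (y : V), wvec_mem v0 (y : V)⟩ : LinearMap.ker (sigmaLin V))) := by
  apply LinearIndependent.of_comp (LinearMap.ker (sigmaLin V)).subtype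
  rw [Fintype.linearIndependent_iff]
  intro g hg y
  have h0 : (∑ y' : {a : V // ¬ a = v0}, g y' • wvec v0 (y' : V)) = 0 := hg
  have h1 : (∑ y' : {a : V // ¬ a = v0}, g y' • wvec v0 (y' : V)) (y : V) = 0 := by
    rw [h0]; rfl
  rw [WithLp.ofLp_sum, Finset.sum_apply] at h1
  simp only [PiLp.smul_apply, smul_eq_mul, wvec_apply] at h1
  have h2 : ∀ y' : {a : V // ¬ a = v0}, g y' * ((if (y:V) = (y':V) then (1:ℝ) else 0)
      - (if (y:V) = v0 then 1 else 0)) = if y = y' then g y' else 0 := by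
    intro y'
    have hyv : ¬ (y : V) = v0 := y.2
    by_cases hyy : y = y'
    · subst hyy; simp [hyv]
    · have hne : ¬ (y : V) = (y' : V) := fun h => hyy (Subtype.ext h)
      simp [hne, hyv, hyy]
  rw [Finset.sum_congr rfl (fun y' _ => h2 y'), Finset.sum_ite_eq] at h1
  simpa using h1

lemma wvec_span : ⊤ ≤ Submodule.span ℝ (Set.range fun y : {a : V // ¬ a = v0} =>
    (⟨wvec v0 (y : V), wvec_mem v0 (y : V)⟩ : LinearMap.ker (sigmaLin V))) := by
  intro w _
  have hrepr := repr_w v0 (w : EuclideanSpace ℝ V) w.2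
  have : w = ∑ y : {a : V // ¬ a = v0}, (w : EuclideanSpace ℝ V) (y : V) •
      (⟨wvec v0 (y : V), wvec_mem v0 (y : V)⟩ : LinearMap.ker (sigmaLin V)) := by
    apply Subtype.ext
    simp only [AddSubmonoidClass.coe_finset_sum, SetLike.val_smul]
    exact hrepr
  rw [this]
  exact Submodule.sum_mem _ fun y _ => Submodule.smul_mem _ _
    (Submodule.subset_span (Set.mem_range_self y))

/-- basis of the kernel of the sum functional. -/
noncomputable def wB : Module.Basis {a : V // ¬ a = v0} ℝ (LinearMap.ker (sigmaLin V)) :=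
  Module.Basis.mk (wvec_li v0) (wvec_span v0)


/-- evaluation at a coordinate, as a functional on the kernel. -/
noncomputable def evalW (y : V) : (LinearMap.ker (sigmaLin V)) →ₗ[ℝ] ℝ where
  toFun w := (w : EuclideanSpace ℝ V) y
  map_add' w w' := rfl
  map_smul' c w := rfl

lemma wB_repr (w : LinearMap.ker (sigmaLin V)) (y : {a : V // ¬ a = v0}) :
    (wB v0).repr w y = (w : EuclideanSpace ℝ V) (y : V) := by
  have h : (wB v0).coord y = evalW (V := V) (y : V) := by
    apply Module.Basis.ext (wB v0)
    intro z
    rw [Module.Basis.coord_apply, Module.Basis.repr_self]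
    show _ = evalW (V := V) (y : V) (wB v0 z)
    rw [wB, Module.Basis.mk_apply]
    show _ = wvec v0 (z : V) (y : V)
    rw [wvec_apply, Finsupp.single_apply]
    have hyv : ¬ (y : V) = v0 := y.2
    by_cases hzy : z = y
    · subst hzy; simp [hyv]
    · have : ¬ (y : V) = (z : V) := fun h => hzy (Subtype.ext h.symm)
      simp [hzy, this, hyv]
  have := congrArg (fun f => f w) h
  simp only [Module.Basis.coord_apply] at this
  exact this

include hInd v0 in
lemma det_restrict :
    LinearMap.det ((modLin G C).restrict
      (fun x hx => modLin_mem_ker G C hInd x hx)) = ∏ x, (dR G C x + 1)⁻¹ := by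
  classical
  rw [← LinearMap.det_toMatrix (wB v0)]
  have hmat : LinearMap.toMatrix (wB v0) (wB v0) ((modLin G C).restrict
      (fun x hx => modLin_mem_ker G C hInd x hx))
      = Matrix.toSquareBlockProp (Nmat G C v0) (fun i => ¬ i = v0) := by
    ext y z
    rw [LinearMap.toMatrix_apply, wB_repr, Matrix.toSquareBlockProp_def, Matrix.of_apply]
    rw [wB, Module.Basis.mk_apply]
    have hres : (((modLin G C).restrict (fun x hx => modLin_mem_ker G C hInd x hx))
        (⟨wvec v0 (z : V), wvec_mem v0 (z : V)⟩) : EuclideanSpace ℝ V)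
        = modLin G C (wvec v0 (z : V)) := rfl
    rw [hres]
    show (∑ k, modMat G C (y : V) k * wvec v0 (z : V) k) = _
    have h1 : ∀ k, modMat G C (y : V) k * wvec v0 (z : V) k
        = (if k = (z : V) then modMat G C (y : V) k else 0)
          - (if k = v0 then modMat G C (y : V) k else 0) := by
      intro k
      rw [wvec_apply, mul_sub]
      simp [mul_ite]
    rw [Finset.sum_congr rfl (fun k _ => h1 k), Finset.sum_sub_distrib]
    rw [Finset.sum_ite_eq', Finset.sum_ite_eq']
    unfold Nmat
    simp [y.2, z.2]
  rw [hmat]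
  have hzero : ∀ i, ¬ (¬ i = v0) → ∀ j, (¬ j = v0) → Nmat G C v0 i j = 0 := by
    intro i hi j hj
    have hi' : i = v0 := not_not.mp hi
    unfold Nmat
    simp [hi', hj]
  have htri := Matrix.twoBlockTriangular_det (Nmat G C v0) (fun i => ¬ i = v0) hzero
  have hb2 : (Matrix.toSquareBlockProp (Nmat G C v0) (fun i => ¬¬ i = v0)) = 1 := by
    ext i j
    have hi : (i : V) = v0 := not_not.mp i.2
    have hj : (j : V) = v0 := not_not.mp j.2
    have hij : i = j := Subtype.ext (hi.trans hj.symm)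
    rw [Matrix.toSquareBlockProp_def, Matrix.of_apply, hij, Matrix.one_apply_eq]
    unfold Nmat
    simp [hj]
  rw [hb2, Matrix.det_one, mul_one] at htri
  rw [← htri, det_Nmat G C hInd v0, det_modMat G C hInd]


include hInd in
theorem main_nonempty [Nonempty V] :
    μH[((Fintype.card V - 1 : ℕ) : ℝ)] (strongModePolytope G ↑C) =
      ENNReal.ofReal |∏ x, (dR G C x + 1)⁻¹| *
      μH[((Fintype.card V - 1 : ℕ) : ℝ)] (probSimplex V) := by
  classical
  obtain ⟨v0⟩ := ‹Nonempty V›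
  set m : ℕ := Fintype.card V - 1 with hm
  set d : ℝ := ((m : ℕ) : ℝ) with hdd
  have hd : 0 ≤ d := Nat.cast_nonneg _
  set W : Submodule ℝ (EuclideanSpace ℝ V) := LinearMap.ker (sigmaLin V) with hWdef
  set p0 : EuclideanSpace ℝ V := EuclideanSpace.single v0 (1:ℝ) with hp0def
  have hp0sum : sigmaLin V p0 = 1 := by
    rw [sigmaLin_apply]
    simp [hp0def, EuclideanSpace.single_apply, Finset.sum_ite_eq]
  have hsurj : Function.Surjective (sigmaLin V) := by
    intro c
    exact ⟨c • p0, by rw [_root_.map_smul, hp0sum]; simp⟩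
  have hrank : Module.finrank ℝ W = m := by
    have h := (sigmaLin V).finrank_range_add_finrank_ker
    rw [LinearMap.range_eq_top.mpr hsurj, finrank_top, Module.finrank_self,
      finrank_euclideanSpace] at h
    rw [← hWdef] at h
    have hcard : 1 ≤ Fintype.card V := Fintype.card_pos
    omega
  set bW : OrthonormalBasis (Fin m) ℝ W :=
    (stdOrthonormalBasis ℝ W).reindex (finCongr hrank) with hbW
  set hW : ∀ x ∈ W, modLin G C x ∈ W := fun x hx => modLin_mem_ker G C hInd x hx with hWmem
  set φ : EuclideanSpace ℝ (Fin m) → EuclideanSpace ℝ V :=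
    fun x => p0 + ((bW.repr.symm x : W) : EuclideanSpace ℝ V) with hφdef
  have hiso : Isometry φ := by
    have h1 : Isometry ((↑) : W → EuclideanSpace ℝ V) := isometry_subtype_coe
    have h2 : Isometry (fun q : EuclideanSpace ℝ V => p0 + q) :=
      Isometry.of_dist_eq fun a b => dist_add_left p0 a b
    exact h2.comp (h1.comp bW.repr.symm.isometry)
  have hrangesub : probSimplex V ⊆ Set.range φ := by
    intro q hq
    have hmem : q - p0 ∈ W := by
      rw [hWdef, LinearMap.mem_ker, map_sub, hp0sum]
      have : sigmaLin V q = 1 := hq.2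
      rw [this]; ring
    refine ⟨bW.repr ⟨q - p0, hmem⟩, ?_⟩
    show p0 + ((bW.repr.symm (bW.repr ⟨q - p0, hmem⟩) : W) : EuclideanSpace ℝ V) = q
    rw [LinearIsometryEquiv.symm_apply_apply]
    show p0 + (q - p0) = q
    abel
  set A : Set (EuclideanSpace ℝ (Fin m)) := φ ⁻¹' (probSimplex V) with hAdef
  have hA : φ '' A = probSimplex V := by
    rw [hAdef, Set.image_preimage_eq_inter_range, Set.inter_eq_left.mpr hrangesub]
  have hw0mem : modLin G C p0 - p0 ∈ W := by
    rw [hWdef, LinearMap.mem_ker, map_sub]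
    have h1 : sigmaLin V (modLin G C p0) = sigmaLin V p0 := sum_modLin G C hInd p0
    rw [h1]; ring
  set w0 : W := ⟨modLin G C p0 - p0, hw0mem⟩ with hw0def
  set eW : W ≃ₗ[ℝ] EuclideanSpace ℝ (Fin m) := bW.repr.toLinearEquiv with heW
  set Lmap : EuclideanSpace ℝ (Fin m) →ₗ[ℝ] EuclideanSpace ℝ (Fin m) :=
    (eW : W →ₗ[ℝ] EuclideanSpace ℝ (Fin m)) ∘ₗ ((modLin G C).restrict hW) ∘ₗ
      (eW.symm : EuclideanSpace ℝ (Fin m) →ₗ[ℝ] W) with hLdef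
  have hdetL : LinearMap.det Lmap = ∏ x, (dR G C x + 1)⁻¹ := by
    rw [hLdef, LinearMap.det_conj, det_restrict G C hInd v0]
  set c0 : EuclideanSpace ℝ (Fin m) := bW.repr w0 with hc0
  set ψ : EuclideanSpace ℝ (Fin m) → EuclideanSpace ℝ (Fin m) :=
    fun x => c0 + Lmap x with hψdef
  have hkey : ∀ x, φ (ψ x) = modLin G C (φ x) := by
    intro x
    show p0 + ((bW.repr.symm (c0 + Lmap x) : W) : EuclideanSpace ℝ V) = _
    have h1 : bW.repr.symm (c0 + Lmap x)
        = w0 + ((modLin G C).restrict hW) (bW.repr.symm x) := by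
      rw [map_add, hc0, LinearIsometryEquiv.symm_apply_apply]
      congr 1
      exact bW.repr.symm_apply_apply _
    rw [h1]
    show p0 + ((modLin G C p0 - p0) + modLin G C ((bW.repr.symm x : W) : EuclideanSpace ℝ V)) = _
    rw [map_add]
    abel
  have himg : strongModePolytope G ↑C = φ '' (ψ '' A) := by
    rw [← image_modLin G C hInd, ← hA, ← Set.image_comp, ← Set.image_comp]
    exact Set.image_congr' (fun x => (hkey x).symm)
  haveI hHaar : Measure.IsAddHaarMeasure (μH[d] : Measure (EuclideanSpace ℝ (Fin m))) := by
    have h : d = ((Module.finrank ℝ (EuclideanSpace ℝ (Fin m)) : ℕ) : ℝ) := by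
      rw [finrank_euclideanSpace_fin]
    rw [h]
    infer_instance
  have step1 : μH[d] (strongModePolytope G ↑C) = μH[d] (ψ '' A) := by
    rw [himg, hiso.hausdorffMeasure_image (Or.inl hd)]
  have step2 : μH[d] (ψ '' A) = ENNReal.ofReal |LinearMap.det Lmap| * μH[d] A := by
    have h1 : ψ '' A = (fun u => c0 + u) '' (Lmap '' A) := by
      rw [← Set.image_comp]
      rfl
    rw [h1, Set.image_add_left, measure_preimage_add,
      Measure.addHaar_image_linearMap]
  have step3 : μH[d] A = μH[d] (probSimplex V) := by
    rw [hAdef, hiso.hausdorffMeasure_preimage (Or.inl hd),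
      Set.inter_eq_left.mpr hrangesub]
  rw [step1, step2, step3, hdetL]

end SMPAux

/-- For an independent `C`, the `(|V|-1)`-dimensional volume of the strong mode
polytope is `∏_{x ∈ V} 1/(|N_C(x)| + 1)` times the volume of the probability
simplex, where `N_C(x) = {y ∈ C : y ∼ x}`. -/
theorem volume_strongModePolytope {V : Type*} [Fintype V] [DecidableEq V]
    (G : SimpleGraph V) [DecidableRel G.Adj] (C : Finset V)
    (hInd : ∀ x ∈ C, ∀ y ∈ C, ¬ G.Adj x y) :
    μH[((Fintype.card V - 1 : ℕ) : ℝ)] (strongModePolytope G ↑C) =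
      (∏ x : V, ((((C.filter fun y => G.Adj y x).card : ℝ≥0∞) + 1))⁻¹) *
      μH[((Fintype.card V - 1 : ℕ) : ℝ)] (probSimplex V) := by
  classical
  cases isEmpty_or_nonempty V with
  | inl h =>
    have h1 : probSimplex V = ∅ := by
      ext p
      simp [probSimplex, Finset.univ_eq_empty]
    have h2 : strongModePolytope G ↑C = ∅ := by
      rw [Set.eq_empty_iff_forall_notMem]
      intro p hp
      have hp1 := hp.1
      rw [h1] at hp1
      exact hp1
    rw [h1, h2]
    simp
  | inr h =>
    rw [SMPAux.main_nonempty G C hInd]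
    congr 1
    have hpos : ∀ x ∈ Finset.univ (α := V), (0:ℝ) ≤ (SMPAux.dR G C x + 1)⁻¹ :=
      fun x _ => inv_nonneg.mpr (SMPAux.dR_add_one_pos G C x).le
    rw [abs_of_nonneg (Finset.prod_nonneg hpos), ENNReal.ofReal_prod_of_nonneg hpos]
    apply Finset.prod_congr rfl
    intro x _
    rw [ENNReal.ofReal_inv_of_pos (SMPAux.dR_add_one_pos G C x)]
    congr 1
    rw [show SMPAux.dR G C x + 1 = (((C.filter fun y => G.Adj y x).card + 1 : ℕ) : ℝ) from by
      push_cast [SMPAux.dR]; ring]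
    rw [ENNReal.ofReal_natCast]
    push_cast
    ring
end
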